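/- An element (α,P) of the concrete model M_n is symmetric (fixed by every σ ∈ Equiv.Perm (Fin n)) if and only if α is a constant function and there exist polynomials f, g ∈ MvPolynomial (Fin n) K with rename π f = f for every permutation π fixing 0 and rename π g = g for every permutation π fixing both 0 and 1, such that P(i,i) = rename (Equiv.swap 0 i) f for every i, and P(i,j) = rename σ g for all i ≠ j and every permutation σ with σ(0) = i and σ(1) = j. -/

import Mathlib

open MvPolynomial

/-- The action of `σ ∈ Equiv.Perm (Fin n)` on the concrete model `M_n` of the
free metabelian Leibniz algebra `L_n`, corresponding to the substitution
`x_i ↦ x_{σ(i)}`; here `(α, P)` represents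
`Σ_i α_i x_i + Σ_{(i,j)} [x_i,x_j]·P(i,j)(r_1,…,r_n)`. -/
noncomputable def permAct {K : Type*} [Field K] {n : ℕ} (σ : Equiv.Perm (Fin n))
    (v : (Fin n → K) × (Fin n × Fin n → MvPolynomial (Fin n) K)) :
    (Fin n → K) × (Fin n × Fin n → MvPolynomial (Fin n) K) :=
  (v.1 ∘ ⇑σ⁻¹, fun p => rename ⇑σ (v.2 (σ⁻¹ p.1, σ⁻¹ p.2)))

lemma exists_perm_map {n : ℕ} [NeZero n] (h01 : (0 : Fin n) ≠ 1) {x y : Fin n} (hxy : x ≠ y) :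
    ∃ ρ : Equiv.Perm (Fin n), ρ 0 = x ∧ ρ 1 = y := by
  set t := Equiv.swap 0 x y with ht
  have ht0 : t ≠ 0 := by
    intro h
    apply hxy
    have := Equiv.swap_apply_self 0 x y
    rw [← ht, h, Equiv.swap_apply_left] at this
    exact this
  refine ⟨Equiv.swap 0 x * Equiv.swap 1 t, ?_, ?_⟩
  · have : Equiv.swap 1 t 0 = 0 := Equiv.swap_apply_of_ne_of_ne h01 (Ne.symm ht0)
    simp [Equiv.Perm.mul_apply, this]
  · have : Equiv.swap 1 t 1 = t := Equiv.swap_apply_left 1 t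
    rw [Equiv.Perm.mul_apply, this, ht, Equiv.swap_apply_self]

/-- An element `(α, P)` of the concrete model `M_n` is symmetric (fixed by every
permutation of the variables) iff `α` is constant and there exist polynomials
`f, g`, with `f` invariant under permutations fixing `0` and `g` invariant under
permutations fixing `0` and `1`, such that `P(i,i) = rename (swap 0 i) f` for
every `i`, and `P(i,j) = rename σ g` for all `i ≠ j` and every `σ` with
`σ 0 = i`, `σ 1 = j`. -/
theorem model_symmetric_iff
    {K : Type*} [Field K] [CharZero K] {n : ℕ} [NeZero n] (hn : 2 ≤ n)
    (v : (Fin n → K) × (Fin n × Fin n → MvPolynomial (Fin n) K)) :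
    (∀ σ : Equiv.Perm (Fin n), permAct σ v = v) ↔
      ((∀ i j : Fin n, v.1 i = v.1 j) ∧
       ∃ f g : MvPolynomial (Fin n) K,
         (∀ π : Equiv.Perm (Fin n), π 0 = 0 → rename (⇑π) f = f) ∧
         (∀ π : Equiv.Perm (Fin n), π 0 = 0 → π 1 = 1 → rename (⇑π) g = g) ∧
         (∀ i : Fin n, v.2 (i, i) = rename (⇑(Equiv.swap 0 i)) f) ∧
         (∀ i j : Fin n, i ≠ j → ∀ σ : Equiv.Perm (Fin n), σ 0 = i → σ 1 = j →
           v.2 (i, j) = rename (⇑σ) g)) := by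
  have h01 : (0 : Fin n) ≠ 1 := by
    intro h
    have := congrArg Fin.val h
    rw [Fin.val_zero, Fin.val_one', Nat.mod_eq_of_lt (by omega)] at this
    omega
  constructor
  · intro h
    have h1 : ∀ σ : Equiv.Perm (Fin n), v.1 ∘ ⇑σ⁻¹ = v.1 :=
      fun σ => congrArg Prod.fst (h σ)
    have h2 : ∀ σ : Equiv.Perm (Fin n), ∀ a b : Fin n,
        rename ⇑σ (v.2 (σ⁻¹ a, σ⁻¹ b)) = v.2 (a, b) := by
      intro σ a b
      have := congrArg Prod.snd (h σ)
      exact congrFun this (a, b)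
    refine ⟨?_, v.2 (0, 0), v.2 (0, 1), ?_, ?_, ?_, ?_⟩
    · intro i j
      have := congrFun (h1 (Equiv.swap i j)) i
      simpa [Equiv.swap_apply_left] using this.symm
    · intro π hπ
      have := h2 π 0 0
      rw [show π⁻¹ 0 = 0 from Equiv.Perm.inv_eq_iff_eq.mpr hπ.symm] at this
      exact this
    · intro π hπ0 hπ1
      have := h2 π 0 1
      rw [show π⁻¹ 0 = 0 from Equiv.Perm.inv_eq_iff_eq.mpr hπ0.symm,
          show π⁻¹ 1 = 1 from Equiv.Perm.inv_eq_iff_eq.mpr hπ1.symm] at this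
      exact this
    · intro i
      have := h2 (Equiv.swap 0 i) i i
      rw [show (Equiv.swap 0 i)⁻¹ i = 0 from by simp] at this
      exact this.symm
    · intro i j hij σ hσ0 hσ1
      have := h2 σ i j
      rw [show σ⁻¹ i = 0 from Equiv.Perm.inv_eq_iff_eq.mpr hσ0.symm,
          show σ⁻¹ j = 1 from Equiv.Perm.inv_eq_iff_eq.mpr hσ1.symm] at this
      exact this.symm
  · rintro ⟨hα, f, g, hf, hg, hdiag, hoff⟩ σ
    refine Prod.ext ?_ ?_
    · funext i
      exact hα (σ⁻¹ i) i
    · funext p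
      obtain ⟨a, b⟩ := p
      show rename ⇑σ (v.2 (σ⁻¹ a, σ⁻¹ b)) = v.2 (a, b)
      by_cases hab : a = b
      · subst hab
        rw [hdiag (σ⁻¹ a), hdiag a, rename_rename]
        have key : (⇑σ ∘ ⇑(Equiv.swap 0 (σ⁻¹ a)))
            = ⇑(Equiv.swap 0 a) ∘ ⇑((Equiv.swap 0 a)⁻¹ * σ * Equiv.swap 0 (σ⁻¹ a)) := by
          funext x
          simp [Equiv.Perm.mul_apply]
        rw [key, ← rename_rename]
        congr 1
        apply hf
        simp [Equiv.Perm.mul_apply]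
      · have hab' : σ⁻¹ a ≠ σ⁻¹ b := fun h => hab (by simpa using congrArg σ h)
        obtain ⟨ρ, hρ0, hρ1⟩ := exists_perm_map h01 hab'
        rw [hoff _ _ hab' ρ hρ0 hρ1, rename_rename]
        have := hoff a b hab (σ * ρ)
          (by simp [Equiv.Perm.mul_apply, hρ0]) (by simp [Equiv.Perm.mul_apply, hρ1])
        rw [this]
        rfl
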